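/- arXiv:math/0305052 — 2 statements merged into one kernel-verified Lean document; each statement's English description precedes it below -/
import Mathlib

section
/- Let A be a unital complex Banach algebra and f, i ∈ A. Let M = T(f,i) = ![![f, 0], ![i, f]] in Matrix (Fin 2) (Fin 2) A. Then the matrix exponential of M is exp(M) = ![![exp f, 0], ![x, exp f]], where x = ∑'_{n : ℕ} ((n+1)! : ℂ)⁻¹ • (∑_{k=0}^{n} f^k * i * f^{n−k}). (Equivalently, x = ∑_{n ≥ 1} (1/n!) ∑_{k+l=n−1} f^k · i · f^l.) -/
open NormedSpace

/-- For `a b : A`, `T a b` is the 2×2 matrix `![![a, 0], ![b, a]]`. -/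
def T {A : Type*} [Ring A] (a b : A) : Matrix (Fin 2) (Fin 2) A :=
  ![![a, 0], ![b, a]]

lemma T_mul {A : Type*} [Ring A] (a b c d : A) :
    T a b * T c d = T (a * c) (b * c + a * d) := by
  ext x y
  fin_cases x <;> fin_cases y <;>
    simp [Matrix.mul_apply, Fin.sum_univ_two] <;> simp [T]

lemma T_smul {A : Type*} [Ring A] [Module ℂ A] (c : ℂ) (a b : A) :
    c • T a b = T (c • a) (c • b) := by
  ext x y
  fin_cases x <;> fin_cases y <;> simp [Matrix.smul_apply] <;> simp [T]

lemma T_one {A : Type*} [Ring A] : (1 : Matrix (Fin 2) (Fin 2) A) = T 1 0 := by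
  ext x y
  fin_cases x <;> fin_cases y <;> simp [T, Matrix.one_apply]

lemma T_pow {A : Type*} [Ring A] (f i : A) (n : ℕ) :
    (T f i) ^ n = T (f ^ n) (∑ k ∈ Finset.range n, f ^ k * i * f ^ (n - 1 - k)) := by
  induction n with
  | zero => simp [T_one]
  | succ n ih =>
      rw [pow_succ, ih, T_mul, ← pow_succ]
      have h1 : (∑ k ∈ Finset.range n, f ^ k * i * f ^ (n - 1 - k)) * f
          = ∑ k ∈ Finset.range n, f ^ k * i * f ^ (n + 1 - 1 - k) := by
        rw [Finset.sum_mul]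
        refine Finset.sum_congr rfl fun k hk => ?_
        rw [Finset.mem_range] at hk
        rw [mul_assoc, mul_assoc, ← pow_succ]
        have h : n - 1 - k + 1 = n + 1 - 1 - k := by omega
        rw [h, mul_assoc]
      rw [Finset.sum_range_succ, ← h1]
      simp

/-- In a unital complex Banach algebra `A`, the exponential of the matrix
`M = T f i = ![![f, 0], ![i, f]]` is `![![exp f, 0], ![x, exp f]]` where
`x = ∑'_{n} ((n+1)!)⁻¹ • (∑_{k=0}^{n} f^k * i * f^(n-k))`. -/
theorem stmt3 {A : Type*} [NormedRing A] [NormedAlgebra ℂ A] [CompleteSpace A]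
    (f i : A) :
    exp (T f i) =
      T (exp f)
        (∑' n : ℕ, (((n + 1).factorial : ℂ))⁻¹ •
          ∑ k ∈ Finset.range (n + 1), f ^ k * i * f ^ (n - k)) := by
  set D : ℝ := ‖(1 : A)‖ + 1 with hD
  set B : ℝ := ‖f‖ + 1 with hB
  have hB1 : (1 : ℝ) ≤ B := by simp only [hB]; linarith [norm_nonneg f]
  have hD1 : (1 : ℝ) ≤ D := by simp only [hD]; linarith [norm_nonneg (1 : A)]
  have hpow : ∀ k : ℕ, ‖f ^ k‖ ≤ D * B ^ k := by
    intro k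
    rcases Nat.eq_zero_or_pos k with hk | hk
    · subst hk; simpa using by nlinarith [norm_nonneg (1 : A)]
    · calc ‖f ^ k‖ ≤ ‖f‖ ^ k := norm_pow_le' f hk
        _ ≤ B ^ k := by
            apply pow_le_pow_left₀ (norm_nonneg f)
            simp [hB]
        _ ≤ D * B ^ k := by nlinarith [pow_nonneg (by linarith : (0:ℝ) ≤ B) k]
  -- summability of the (1,0)-entry series
  have hg : Summable (fun n : ℕ => (((n + 1).factorial : ℂ))⁻¹ •
      ∑ k ∈ Finset.range (n + 1), f ^ k * i * f ^ (n - k)) := by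
    apply Summable.of_norm_bounded
      (g := fun n : ℕ => (D * D * ‖i‖) * (B ^ n / n.factorial))
    · exact (Real.summable_pow_div_factorial B).mul_left _
    · intro n
      rw [norm_smul]
      have hbound : ‖∑ k ∈ Finset.range (n + 1), f ^ k * i * f ^ (n - k)‖
          ≤ (n + 1) * (D * D * ‖i‖ * B ^ n) := by
        calc ‖∑ k ∈ Finset.range (n + 1), f ^ k * i * f ^ (n - k)‖
            ≤ ∑ k ∈ Finset.range (n + 1), ‖f ^ k * i * f ^ (n - k)‖ :=
              norm_sum_le _ _
          _ ≤ ∑ k ∈ Finset.range (n + 1), D * D * ‖i‖ * B ^ n := by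
              refine Finset.sum_le_sum fun k hk => ?_
              rw [Finset.mem_range] at hk
              calc ‖f ^ k * i * f ^ (n - k)‖ ≤ ‖f ^ k‖ * ‖i‖ * ‖f ^ (n - k)‖ := by
                    exact le_trans (norm_mul_le _ _)
                      (mul_le_mul_of_nonneg_right (norm_mul_le _ _) (norm_nonneg _))
                _ ≤ (D * B ^ k) * ‖i‖ * (D * B ^ (n - k)) := by
                    have h1 := hpow k
                    have h2 := hpow (n - k)
                    gcongr

                _ = D * D * ‖i‖ * (B ^ k * B ^ (n - k)) := by ring
                _ = D * D * ‖i‖ * B ^ n := by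
                    rw [← pow_add]
                    congr 2
                    omega
          _ = (n + 1) * (D * D * ‖i‖ * B ^ n) := by
              rw [Finset.sum_const, Finset.card_range]
              push_cast; ring
      have hnorm : ‖(((n + 1).factorial : ℂ))⁻¹‖ = (((n + 1).factorial : ℝ))⁻¹ := by
        rw [norm_inv]
        norm_cast
      rw [hnorm]
      have hfac : (((n + 1).factorial : ℝ))⁻¹ * (n + 1) = ((n.factorial : ℝ))⁻¹ := by
        rw [Nat.factorial_succ]
        push_cast
        rw [mul_inv]
        field_simp
      calc (((n + 1).factorial : ℝ))⁻¹ * ‖∑ k ∈ Finset.range (n + 1), f ^ k * i * f ^ (n - k)‖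
          ≤ (((n + 1).factorial : ℝ))⁻¹ * ((n + 1) * (D * D * ‖i‖ * B ^ n)) := by
            apply mul_le_mul_of_nonneg_left hbound
            positivity
        _ = D * D * ‖i‖ * (B ^ n / n.factorial) := by
            rw [← mul_assoc, hfac]; ring
  set x : A := ∑' n : ℕ, (((n + 1).factorial : ℂ))⁻¹ •
      ∑ k ∈ Finset.range (n + 1), f ^ k * i * f ^ (n - k) with hx
  have hgx : HasSum (fun n : ℕ => (((n + 1).factorial : ℂ))⁻¹ •
      ∑ k ∈ Finset.range (n + 1), f ^ k * i * f ^ (n - k)) x := hg.hasSum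
  -- shift to the unshifted series
  have hhx : HasSum (fun n : ℕ => ((n.factorial : ℂ))⁻¹ •
      ∑ k ∈ Finset.range n, f ^ k * i * f ^ (n - 1 - k)) x := by
    have heq : (fun n : ℕ => ((n + 1).factorial : ℂ)⁻¹ •
        ∑ k ∈ Finset.range (n + 1), f ^ k * i * f ^ (n - k))
        = fun n : ℕ => (((n + 1).factorial : ℂ))⁻¹ •
          ∑ k ∈ Finset.range (n + 1), f ^ k * i * f ^ (n + 1 - 1 - k) := by
      funext n
      congr 1
    rw [heq] at hgx
    have := (hasSum_nat_add_iff (f := fun n : ℕ => ((n.factorial : ℂ))⁻¹ •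
      ∑ k ∈ Finset.range n, f ^ k * i * f ^ (n - 1 - k)) 1).mp hgx
    simpa using this
  have H : HasSum (fun n : ℕ => ((n.factorial : ℂ))⁻¹ • (T f i) ^ n) (T (exp f) x) := by
    have hrw : (fun n : ℕ => ((n.factorial : ℂ))⁻¹ • (T f i) ^ n)
        = fun n : ℕ => T (((n.factorial : ℂ))⁻¹ • f ^ n)
            (((n.factorial : ℂ))⁻¹ • ∑ k ∈ Finset.range n, f ^ k * i * f ^ (n - 1 - k)) := by
      funext n
      rw [T_pow, T_smul]
    rw [hrw]
    have hf := NormedSpace.exp_series_hasSum_exp' (𝕂 := ℂ) f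
    refine Pi.hasSum.mpr ?_
    intro a
    rw [Pi.hasSum]
    intro b
    fin_cases a <;> fin_cases b <;> simp [T]
    · exact hf
    · exact hhx
    · exact hf
  rw [exp_eq_tsum ℂ]
  exact H.tsum_eq
end

section
/- Let A be a unital complex Banach algebra and f, i ∈ A. Then (∑'_{n : ℕ} ((n+1)! : ℂ)⁻¹ • (∑_{k=0}^{n} f^k * i * f^{n−k})) * exp(−f) = ∑'_{l : ℕ} ((l+1)! : ℂ)⁻¹ • (ad f)^[l] i, where (ad f)^[l] is the l-th iterate of the map x ↦ f*x − x*f. (This identity relates the lower-left entry x of exp(T(f,i)) from the paper's Example to the homotopy ρ = −∑_l (1/(l+1)!)·δ_f^l(i) used in the proof of the main theorem.) -/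
open NormedSpace Finset

private lemma altsum (N t : ℕ) (ht : t ≤ N) :
    ∑ j ∈ range (t + 1), (-1 : ℂ) ^ j * ((N + 1).choose j : ℂ)
      = (-1) ^ t * (N.choose t : ℂ) := by
  induction t with
  | zero => simp
  | succ t ih =>
    rw [sum_range_succ, ih (by omega), Nat.choose_succ_succ']
    push_cast
    ring

private lemma adpow {A : Type*} [Ring A] [Algebra ℂ A] (f i : A) (l : ℕ) :
    (fun x => f * x - x * f)^[l] i
      = ∑ k ∈ range (l + 1),
          ((-1 : ℂ) ^ (l - k) * (l.choose k : ℂ)) • (f ^ k * i * f ^ (l - k)) := by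
  set L := LinearMap.mulLeft ℂ f
  set R := LinearMap.mulRight ℂ f
  have hfun : (fun x => f * x - x * f) = ⇑(L - R) := by
    funext x; simp [L, R]
  have hcomm : Commute L (-R) := by
    show L * -R = -R * L
    ext x
    simp [L, R, mul_assoc]
  have hR : (-R) = (-1 : ℂ) • R := (neg_one_smul ℂ R).symm
  rw [hfun, ← Module.End.pow_apply, sub_eq_add_neg, Commute.add_pow hcomm,
    LinearMap.sum_apply]
  refine Finset.sum_congr rfl fun k hk => ?_
  rw [hR, smul_pow]
  simp only [L, R, mul_smul_comm, smul_mul_assoc, LinearMap.smul_apply, Module.End.mul_apply,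
    Module.End.natCast_apply, LinearMap.pow_mulLeft, LinearMap.pow_mulRight,
    map_nsmul, LinearMap.mulRight_apply, LinearMap.mulLeft_apply, mul_smul_comm]
  rw [mul_smul, Nat.cast_smul_eq_nsmul ℂ, mul_assoc]

private lemma coeff (N k : ℕ) (hk : k ≤ N) :
    ∑ n ∈ Icc k N, (-1 : ℂ) ^ (N - n) * (((n + 1).factorial : ℂ)⁻¹ * ((N - n).factorial : ℂ)⁻¹)
      = ((N + 1).factorial : ℂ)⁻¹ * ((-1) ^ (N - k) * (N.choose k : ℂ)) := by
  have hstep : ∑ n ∈ Icc k N,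
        (-1 : ℂ) ^ (N - n) * (((n + 1).factorial : ℂ)⁻¹ * ((N - n).factorial : ℂ)⁻¹)
      = ((N + 1).factorial : ℂ)⁻¹ *
          ∑ n ∈ Icc k N, (-1 : ℂ) ^ (N - n) * ((N + 1).choose (n + 1) : ℂ) := by
    rw [mul_sum]
    refine sum_congr rfl fun n hn => ?_
    rw [mem_Icc] at hn
    have h1 : ((N + 1).choose (n + 1) : ℂ) * ((n + 1).factorial : ℂ) * ((N - n).factorial : ℂ)
        = ((N + 1).factorial : ℂ) := by
      have := Nat.choose_mul_factorial_mul_factorial (show n + 1 ≤ N + 1 by omega)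
      rw [show N + 1 - (n + 1) = N - n from by omega] at this
      exact_mod_cast this
    have hf1 : ((n + 1).factorial : ℂ) ≠ 0 := Nat.cast_ne_zero.2 (Nat.factorial_ne_zero _)
    have hf2 : ((N - n).factorial : ℂ) ≠ 0 := Nat.cast_ne_zero.2 (Nat.factorial_ne_zero _)
    have hf3 : ((N + 1).factorial : ℂ) ≠ 0 := Nat.cast_ne_zero.2 (Nat.factorial_ne_zero _)
    field_simp
    linear_combination (-1 : ℂ) * h1
  rw [hstep]
  congr 1
  have hre : ∑ n ∈ Icc k N, (-1 : ℂ) ^ (N - n) * ((N + 1).choose (n + 1) : ℂ)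
      = ∑ j ∈ range (N - k + 1), (-1 : ℂ) ^ j * ((N + 1).choose j : ℂ) := by
    refine sum_nbij' (fun n => N - n) (fun j => N - j) ?_ ?_ ?_ ?_ ?_
    · intro n hn; rw [mem_Icc] at hn; rw [mem_range]; omega
    · intro j hj; rw [mem_range] at hj; rw [mem_Icc]; omega
    · intro n hn; rw [mem_Icc] at hn; omega
    · intro j hj; rw [mem_range] at hj; omega
    · intro n hn; rw [mem_Icc] at hn
      have h2 : (N + 1).choose (N - n) = (N + 1).choose (n + 1) := by
        rw [← Nat.choose_symm (show N - n ≤ N + 1 by omega),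
          show N + 1 - (N - n) = n + 1 from by omega]
      rw [h2]
  rw [hre, altsum N (N - k) (by omega), Nat.choose_symm hk]

/-- In a unital complex Banach algebra,
`(∑'_{n} ((n+1)!)⁻¹ • ∑_{k=0}^{n} f^k * i * f^(n-k)) * exp (-f)
  = ∑'_{l} ((l+1)!)⁻¹ • (ad f)^[l] i`,
relating the lower-left entry of `exp (T f i)` to the homotopy
`ρ = -∑_l (1/(l+1)!) • δ_f^l i`. -/
theorem stmt7 {A : Type*} [NormedRing A] [NormedAlgebra ℂ A] [CompleteSpace A]
    (f i : A) :
    (∑' n : ℕ, (((n + 1).factorial : ℂ))⁻¹ •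
        ∑ k ∈ Finset.range (n + 1), f ^ k * i * f ^ (n - k)) * exp (-f) =
      ∑' l : ℕ, (((l + 1).factorial : ℂ))⁻¹ • (fun x => f * x - x * f)^[l] i := by
  set M : ℝ := 1 + ‖f‖ with hMdef
  have hM1 : (1 : ℝ) ≤ M := by simp [hMdef, norm_nonneg]
  have hpow : ∀ k : ℕ, ‖f ^ k‖ ≤ (1 + ‖(1 : A)‖) * M ^ k := by
    intro k
    cases k with
    | zero =>
      simp only [pow_zero, mul_one]
      linarith [norm_nonneg (1 : A)]
    | succ k =>
      calc ‖f ^ (k + 1)‖ ≤ ‖f‖ ^ (k + 1) := norm_pow_le' f k.succ_pos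
        _ ≤ M ^ (k + 1) := by
            apply pow_le_pow_left₀ (norm_nonneg f)
            simp [hMdef]
        _ ≤ (1 + ‖(1 : A)‖) * M ^ (k + 1) := by
            nlinarith [pow_nonneg (le_trans zero_le_one hM1) (k + 1), norm_nonneg (1 : A)]
  set C : ℝ := (1 + ‖(1 : A)‖) * ‖i‖ * (1 + ‖(1 : A)‖) with hCdef
  have hC0 : 0 ≤ C := by positivity
  have ha : Summable fun n : ℕ =>
      ‖(((n + 1).factorial : ℂ))⁻¹ • ∑ k ∈ Finset.range (n + 1), f ^ k * i * f ^ (n - k)‖ := by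
    refine Summable.of_nonneg_of_le (fun n => norm_nonneg _) (fun n => ?_)
      ((Real.summable_pow_div_factorial M).mul_left C)
    have hnorm1 : ‖(((n + 1).factorial : ℂ))⁻¹‖ = (((n + 1).factorial : ℝ))⁻¹ := by
      rw [norm_inv]
      norm_num
    have hsum : ‖∑ k ∈ Finset.range (n + 1), f ^ k * i * f ^ (n - k)‖
        ≤ (n + 1) * (C * M ^ n) := by
      calc ‖∑ k ∈ Finset.range (n + 1), f ^ k * i * f ^ (n - k)‖
          ≤ ∑ k ∈ Finset.range (n + 1), ‖f ^ k * i * f ^ (n - k)‖ := norm_sum_le _ _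
        _ ≤ ∑ k ∈ Finset.range (n + 1), C * M ^ n := by
            refine Finset.sum_le_sum fun k hk => ?_
            rw [Finset.mem_range] at hk
            calc ‖f ^ k * i * f ^ (n - k)‖ ≤ ‖f ^ k‖ * ‖i‖ * ‖f ^ (n - k)‖ :=
                le_trans (norm_mul_le _ _) (mul_le_mul_of_nonneg_right (norm_mul_le _ _) (norm_nonneg _))
              _ ≤ ((1 + ‖(1 : A)‖) * M ^ k) * ‖i‖ * ((1 + ‖(1 : A)‖) * M ^ (n - k)) := by
                  gcongr <;> [exact hpow k; exact hpow (n - k)]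
              _ = C * (M ^ k * M ^ (n - k)) := by rw [hCdef]; ring
              _ = C * M ^ n := by rw [← pow_add, show k + (n - k) = n from by omega]
        _ = (n + 1) * (C * M ^ n) := by
            rw [Finset.sum_const, Finset.card_range]
            push_cast
            ring
    calc ‖(((n + 1).factorial : ℂ))⁻¹ • ∑ k ∈ Finset.range (n + 1), f ^ k * i * f ^ (n - k)‖
        = (((n + 1).factorial : ℝ))⁻¹ *
            ‖∑ k ∈ Finset.range (n + 1), f ^ k * i * f ^ (n - k)‖ := by
          rw [norm_smul, hnorm1]
      _ ≤ (((n + 1).factorial : ℝ))⁻¹ * ((n + 1) * (C * M ^ n)) := by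
          gcongr
      _ = C * (M ^ n / n.factorial) := by
          rw [Nat.factorial_succ]
          have h1 : ((n.factorial : ℝ)) ≠ 0 := Nat.cast_ne_zero.2 (Nat.factorial_ne_zero _)
          have h2 : ((n : ℝ) + 1) ≠ 0 := by positivity
          field_simp
          push_cast
          ring
  have hb : Summable fun m : ℕ => ‖((m.factorial : ℂ))⁻¹ • (-f) ^ m‖ :=
    norm_expSeries_summable' (-f)
  rw [exp_eq_tsum (𝕂 := ℂ)]
  rw [tsum_mul_tsum_eq_tsum_sum_antidiagonal_of_summable_norm ha hb]
  refine tsum_congr fun N => ?_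
  rw [Finset.Nat.sum_antidiagonal_eq_sum_range_succ_mk]
  have h1 : ∀ n ∈ range (N + 1),
      ((((n + 1).factorial : ℂ))⁻¹ • ∑ k ∈ Finset.range (n + 1), f ^ k * i * f ^ (n - k)) *
        (((((N - n)).factorial : ℂ))⁻¹ • (-f) ^ (N - n))
      = ∑ k ∈ range (n + 1),
          ((-1 : ℂ) ^ (N - n) * (((n + 1).factorial : ℂ)⁻¹ * ((N - n).factorial : ℂ)⁻¹)) •
            (f ^ k * i * f ^ (N - k)) := by
    intro n hn
    rw [mem_range] at hn
    have hnf : (-f) ^ (N - n) = (-1 : ℂ) ^ (N - n) • f ^ (N - n) := by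
      rw [← neg_one_smul ℂ f, smul_pow]
    rw [hnf, smul_smul, smul_mul_smul_comm, sum_mul, smul_sum]
    refine sum_congr rfl fun k hk => ?_
    rw [mem_range] at hk
    rw [mul_assoc (f ^ k * i), ← pow_add, show n - k + (N - n) = N - k from by omega]
    congr 1
    ring
  rw [sum_congr rfl h1]
  have swap := Finset.sum_Ico_Ico_comm 0 (N + 1) (fun k n =>
    ((-1 : ℂ) ^ (N - n) * (((n + 1).factorial : ℂ)⁻¹ * ((N - n).factorial : ℂ)⁻¹)) •
      (f ^ k * i * f ^ (N - k)))
  simp only [← Finset.range_eq_Ico] at swap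
  rw [← swap]
  rw [adpow, smul_sum]
  refine sum_congr rfl fun k hk => ?_
  rw [mem_range] at hk
  rw [Finset.Ico_add_one_right_eq_Icc, ← sum_smul, coeff N k (by omega), smul_smul]
end
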